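/- Assuming CH, the poset P_{ω₂,ω₁} (Prikry's poset for adding ω₂-many almost mutually generic ω₁-partitions of ω₁) is ℵ₂-c.c. and countably closed. -/

import Mathlib

/-- The set of ordinals `< ω₁`, as a type representing `ω₁`. -/
abbrev Omega1 : Type 1 := ↥(Set.Iio ((Cardinal.aleph 1).ord : Ordinal.{0}))

/-- The set of ordinals `< ω₂`, as a type representing `ω₂`. -/
abbrev Omega2 : Type 1 := ↥(Set.Iio ((Cardinal.aleph 2).ord : Ordinal.{0}))

/-- Prikry's poset `P_{ω₂,ω₁}`: conditions are pairs `(S, 𝒜)` where `S` is a countable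
partial function from `ω₂ × ω₁` to `ω₁` whose projection to the second coordinate is an
ordinal `< ω₁` (an initial segment `Iio γ`), and `𝒜` is a countable collection of
countably infinite partial functions from `ω₂` to `ω₁` closed under cofinite
restrictions. -/
structure PrikryCond where
  S : Omega2 × Omega1 → Option Omega1
  𝒜 : Set (Omega2 → Option Omega1)
  S_ctble : {x | S x ≠ none}.Countable
  S_init : ∃ γ : Omega1, {β : Omega1 | ∃ α : Omega2, S (α, β) ≠ none} = Set.Iio γ
  𝒜_ctble : 𝒜.Countable
  𝒜_dom : ∀ f ∈ 𝒜, {α | f α ≠ none}.Countable ∧ {α | f α ≠ none}.Infinite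
  𝒜_closed : ∀ f ∈ 𝒜, ∀ g : Omega2 → Option Omega1,
    (∀ α, g α = f α ∨ g α = none) → {α | f α ≠ none ∧ g α = none}.Finite → g ∈ 𝒜

/-- The order on `P_{ω₂,ω₁}`: `q ≤ p` iff `S_q ⊇ S_p`, `𝒜_q ⊇ 𝒜_p`, and for every `β`
in the second-coordinate projection of `S_q` but not of `S_p` and every `f ∈ 𝒜_p`, there
is `α ∈ dom f` with `S_q(α, β) = f(α)`. -/
def PrikryLE (q p : PrikryCond) : Prop :=
  (∀ x v, p.S x = some v → q.S x = some v) ∧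
  p.𝒜 ⊆ q.𝒜 ∧
  ∀ β : Omega1, (∃ α, q.S (α, β) ≠ none) → (¬∃ α, p.S (α, β) ≠ none) →
    ∀ f ∈ p.𝒜, ∃ (α : Omega2) (v : Omega1), f α = some v ∧ q.S (α, β) = some v

noncomputable section PrikryAux
open Cardinal Set Ordinal

lemma aleph2_eq_succ : (Cardinal.aleph 2 : Cardinal.{u}) = Order.succ (Cardinal.aleph 1) := by
  rw [← Ordinal.succ_one, Cardinal.aleph_succ]

lemma lt_aleph2_iff {c : Cardinal.{u}} : c < Cardinal.aleph 2 ↔ c ≤ Cardinal.aleph 1 := by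
  rw [aleph2_eq_succ, Order.lt_succ_iff]

lemma reg1 : (Cardinal.aleph 1 : Cardinal.{u}).IsRegular := Cardinal.isRegular_aleph_one

lemma reg2 : (Cardinal.aleph 2 : Cardinal.{u}).IsRegular := by
  rw [← Ordinal.succ_one]; exact Cardinal.isRegular_aleph_succ 1

lemma lift_aleph_one : Cardinal.lift.{1} (Cardinal.aleph 1 : Cardinal.{0}) = Cardinal.aleph 1 := by
  rw [Cardinal.lift_aleph]; norm_num

lemma lift_aleph_two : Cardinal.lift.{1} (Cardinal.aleph 2 : Cardinal.{0}) = Cardinal.aleph 2 := by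
  rw [Cardinal.lift_aleph]; norm_num

lemma mk_omega1' : #Omega1 = Cardinal.aleph 1 := by
  rw [Ordinal.mk_Iio_ordinal, Cardinal.card_ord, lift_aleph_one]

lemma mk_omega2' : #Omega2 = Cardinal.aleph 2 := by
  rw [Ordinal.mk_Iio_ordinal, Cardinal.card_ord, lift_aleph_two]

lemma CH1 (hCH : Cardinal.continuum.{0} = Cardinal.aleph 1) :
    (Cardinal.continuum : Cardinal.{1}) = Cardinal.aleph 1 := by
  rw [← Cardinal.lift_continuum.{1,0}, hCH, lift_aleph_one]

lemma aleph1_pow_aleph0 (hCH : Cardinal.continuum.{0} = Cardinal.aleph 1) :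
    (Cardinal.aleph 1 : Cardinal.{1}) ^ (Cardinal.aleph0 : Cardinal.{1}) = Cardinal.aleph 1 := by
  have h := CH1 hCH
  rw [← h, ← Cardinal.two_power_aleph0, ← Cardinal.power_mul, Cardinal.aleph0_mul_aleph0]

lemma exists_big_fiber {α β : Type 1} (f : α → β) (hα : Cardinal.aleph 2 ≤ #α)
    (hβ : #β ≤ Cardinal.aleph 1) : ∃ b : β, Cardinal.aleph 2 ≤ #{a : α // f a = b} := by
  by_contra h
  push_neg at h
  have h' : ∀ b, #{a : α // f a = b} ≤ Cardinal.aleph 1 := fun b => lt_aleph2_iff.1 (h b)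
  have e1 : #α = #(Σ b : β, {a : α // f a = b}) := mk_congr (Equiv.sigmaFiberEquiv f).symm
  rw [mk_sigma] at e1
  have e2 : Cardinal.sum (fun b : β => #{a : α // f a = b}) ≤
      Cardinal.sum (fun _ : β => Cardinal.aleph 1) := Cardinal.sum_le_sum _ _ h'
  rw [Cardinal.sum_const'] at e2
  have e3 : #β * Cardinal.aleph 1 ≤ Cardinal.aleph 1 * Cardinal.aleph 1 :=
    mul_le_mul_left hβ _
  rw [Cardinal.mul_eq_self (Cardinal.aleph0_le_aleph 1)] at e3
  have : Cardinal.aleph 2 ≤ Cardinal.aleph 1 := hα.trans (e1 ▸ (e2.trans e3))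
  exact absurd this (not_le.2 (Cardinal.aleph_lt_aleph.2 one_lt_two))

lemma bdd_lemma {c : Cardinal.{0}} (hc : c.IsRegular) (s : Set Ordinal.{0})
    (hs : ∀ x ∈ s, x < c.ord) (hcard : #s < Cardinal.lift.{1} c) :
    ∃ b, b < c.ord ∧ ∀ x ∈ s, x < b := by
  have hsub : s ⊆ Set.Iio c.ord := fun x hx => hs x hx
  have hsmall : Small.{0} s := small_subset hsub
  set F : Shrink.{0} s → Ordinal.{0} := fun i => ((equivShrink s).symm i).1 + 1 with hF
  have hcard' : #(Shrink.{0} s) < c := by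
    have h2 : Cardinal.lift.{1,0} #(Shrink.{0} s) = #s := by
      rw [Cardinal.lift_mk_shrink'.{1,0} s]; simp
    rw [← h2] at hcard
    exact (Cardinal.lift_lt).1 hcard
  have hFlt : iSup F < c.ord := by
    refine Cardinal.iSup_lt_ord_of_isRegular hc hcard' fun i => ?_
    exact (Cardinal.isSuccLimit_ord hc.aleph0_le).succ_lt (hs _ ((equivShrink s).symm i).2)
  refine ⟨iSup F, hFlt, fun x hx => ?_⟩
  have : F (equivShrink s ⟨x, hx⟩) ≤ iSup F := le_ciSup (Ordinal.bddAbove_range F) _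
  rw [hF] at this
  simp only [Equiv.symm_apply_apply] at this
  exact lt_of_lt_of_le (Order.lt_succ x) (by rw [← Ordinal.add_one_eq_succ]; exact this)

lemma countFun (X : Type 1) (hX : #X ≤ Cardinal.aleph 1)
    (hCH : Cardinal.continuum.{0} = Cardinal.aleph 1) :
    #{h : X → Option Omega1 // {x | h x ≠ none}.Countable} ≤ Cardinal.aleph 1 := by
  classical
  set T := {h : X → Option Omega1 // {x | h x ≠ none}.Countable} with hT
  set enum : ∀ _ : T, ℕ → Option X := fun h =>
    if hne : {x | h.1 x ≠ none}.Nonempty then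
      fun n => some ((h.2.exists_eq_range hne).choose n)
    else fun _ => none
    with henum
  set Φ : T → (ℕ → Option (X × Omega1)) := fun h n =>
    (enum h n).bind (fun x => (h.1 x).map (fun v => (x, v))) with hΦ
  have key : ∀ (h : T) (x : X) (v : Omega1), h.1 x = some v ↔ ∃ n, Φ h n = some (x, v) := by
    intro h x v
    rw [hΦ]
    simp only
    by_cases hne : {x | h.1 x ≠ none}.Nonempty
    · rw [henum]
      simp only [hne, dif_pos]
      obtain hspec := (h.2.exists_eq_range hne).choose_spec
      set e := (h.2.exists_eq_range hne).choose
      constructor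
      · intro hxv
        have hx : x ∈ {x | h.1 x ≠ none} := by simp [hxv]
        rw [hspec] at hx
        obtain ⟨n, hn⟩ := hx
        refine ⟨n, ?_⟩
        simp [hn, hxv]
      · rintro ⟨n, hn⟩
        simp only [Option.bind_some, Option.map_eq_some_iff] at hn
        obtain ⟨w, hw1, hw2⟩ := hn
        injection hw2 with h1' h2'
        rw [h1'] at hw1
        exact h2' ▸ hw1
    · constructor
      · intro hxv
        exact absurd ⟨x, by simp [hxv]⟩ hne
      · rintro ⟨n, hn⟩
        rw [henum] at hn
        simp only [hne, dif_neg, not_false_iff] at hn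
        simp at hn
  have hinj : Function.Injective Φ := by
    intro h h' heq
    apply Subtype.ext
    funext x
    rcases hh : h.1 x with _ | v
    · rcases hh' : h'.1 x with _ | v
      · rfl
      · exfalso
        obtain ⟨n, hn⟩ := (key h' x v).1 hh'
        rw [← heq] at hn
        have := (key h x v).2 ⟨n, hn⟩
        rw [hh] at this
        exact nomatch this
    · obtain ⟨n, hn⟩ := (key h x v).1 hh
      rw [heq] at hn
      exact ((key h' x v).2 ⟨n, hn⟩).symm
  have h1 : #T ≤ #(ℕ → Option (X × Omega1)) := Cardinal.mk_le_of_injective hinj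
  have h2 : #(Option (X × Omega1)) ≤ Cardinal.aleph 1 := by
    rw [Cardinal.mk_option, Cardinal.mk_prod, Cardinal.lift_id, Cardinal.lift_id, mk_omega1']
    have hmul : #X * Cardinal.aleph 1 ≤ Cardinal.aleph 1 := by
      calc #X * Cardinal.aleph 1 ≤ Cardinal.aleph 1 * Cardinal.aleph 1 := mul_le_mul_left hX _
      _ = Cardinal.aleph 1 := Cardinal.mul_eq_self (Cardinal.aleph0_le_aleph 1)
    calc #X * Cardinal.aleph 1 + 1 ≤ Cardinal.aleph 1 + 1 := add_le_add_left hmul 1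
    _ = Cardinal.aleph 1 := Cardinal.add_one_eq (Cardinal.aleph0_le_aleph 1)
  have h3 : #(ℕ → Option (X × Omega1)) ≤ Cardinal.aleph 1 := by
    rw [Cardinal.mk_arrow, Cardinal.mk_nat, Cardinal.lift_aleph0, Cardinal.lift_uzero]
    calc #(Option (X × Omega1)) ^ (Cardinal.aleph0 : Cardinal.{1})
        ≤ (Cardinal.aleph 1) ^ (Cardinal.aleph0 : Cardinal.{1}) :=
          Cardinal.power_le_power_right h2
    _ = Cardinal.aleph 1 := aleph1_pow_aleph0 hCH
  exact h1.trans h3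

lemma weak_fodor (f : Omega2 → Ordinal.{0})
    (Hf : ∀ δ : Omega2, ∃ s : Set Ordinal.{0}, s.Countable ∧ (∀ x ∈ s, x < δ.1) ∧ f δ = sSup s) :
    ∃ b, Cardinal.aleph 2 ≤ #{δ : Omega2 // f δ = b} := by
  by_contra hcon
  push_neg at hcon
  have hfib : ∀ b, #{δ : Omega2 // f δ = b} ≤ Cardinal.aleph 1 :=
    fun b => lt_aleph2_iff.1 (hcon b)
  have hBd : ∀ b : Ordinal.{0}, ∃ B, B < (Cardinal.aleph 2).ord ∧
      ∀ δ : Omega2, f δ = b → δ.1 < B := by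
    intro b
    set s : Set Ordinal.{0} := {a | ∃ h : a < (Cardinal.aleph 2).ord, f ⟨a, h⟩ = b} with hsdef
    have hscard : #s ≤ Cardinal.aleph 1 := by
      refine le_trans (Cardinal.mk_le_of_injective
        (f := fun x : s => show {δ : Omega2 // f δ = b} from
          ⟨⟨x.1, x.2.choose⟩, x.2.choose_spec⟩) ?_) (hfib b)
      intro x y hxy
      apply Subtype.ext
      exact congrArg (fun z => z.1.1) hxy
    obtain ⟨B, hB1, hB2⟩ := bdd_lemma reg2 s (fun x hx => hx.choose)
      (by rw [lift_aleph_two]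
          exact lt_of_le_of_lt hscard (Cardinal.aleph_lt_aleph.2 one_lt_two))
    refine ⟨B, hB1, fun δ hδ => ?_⟩
    exact hB2 δ.1 ⟨δ.2, by rwa [Subtype.eta]⟩
  choose Bd hBdlt hBdspec using hBd
  set N : Ordinal.{0} → Ordinal.{0} :=
    fun x => max (x + 1) (Ordinal.bsup.{0,0} x (fun b _ => Bd b + 1)) with hN
  have hNgt : ∀ x, x < N x := fun x => lt_of_lt_of_le (Order.lt_succ x) (le_max_left _ _)
  have hNspec : ∀ x b, b < x → ∀ δ : Omega2, f δ = b → δ.1 < N x := by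
    intro x b hbx δ hδ
    have h1 : Bd b + 1 ≤ N x := le_trans (Ordinal.le_bsup _ b hbx) (le_max_right _ _)
    exact lt_of_lt_of_le (lt_of_lt_of_le (hBdspec b δ hδ) (Order.le_succ _)) h1
  have hNlt : ∀ x, x < (Cardinal.aleph 2).ord → N x < (Cardinal.aleph 2).ord := by
    intro x hx
    rw [hN]
    apply max_lt
    · exact (Cardinal.isSuccLimit_ord (Cardinal.aleph0_le_aleph 2)).succ_lt hx
    · refine Ordinal.bsup_lt_ord ?_
        (fun b _ => (Cardinal.isSuccLimit_ord (Cardinal.aleph0_le_aleph 2)).succ_lt (hBdlt b))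
      rw [reg2.cof_eq]
      exact (Cardinal.lt_ord.1 hx).trans_le le_rfl
  set c : Ordinal.{0} → Ordinal.{0} :=
    Ordinal.lt_wf.fix (fun ξ IH => N (Ordinal.bsup.{0,0} ξ IH)) with hc
  have hceq : ∀ ξ, c ξ = N (Ordinal.bsup.{0,0} ξ (fun η _ => c η)) := by
    intro ξ
    rw [hc]
    exact Ordinal.lt_wf.fix_eq _ ξ
  have hmono : ∀ η ξ, η < ξ → c η < c ξ := by
    intro η ξ hηξ
    rw [hceq ξ]
    exact lt_of_le_of_lt (Ordinal.le_bsup _ η hηξ) (hNgt _)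
  have hclt : ∀ ξ, ξ < (Cardinal.aleph 1).ord → c ξ < (Cardinal.aleph 2).ord := by
    intro ξ
    induction ξ using Ordinal.induction with
    | h ξ IH =>
      intro hξ
      rw [hceq ξ]
      apply hNlt
      refine Ordinal.bsup_lt_ord ?_ (fun η hη => IH η hη (hη.trans hξ))
      rw [reg2.cof_eq]
      exact lt_of_lt_of_le (Cardinal.lt_ord.1 hξ) (Cardinal.aleph_le_aleph.2 one_le_two)
  set Δ : Ordinal.{0} := Ordinal.bsup.{0,0} (Cardinal.aleph 1).ord (fun ξ _ => c ξ) with hΔ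
  have hΔκ : Δ < (Cardinal.aleph 2).ord := by
    refine Ordinal.bsup_lt_ord ?_ hclt
    rw [reg2.cof_eq, Cardinal.card_ord]
    exact Cardinal.aleph_lt_aleph.2 one_lt_two
  have hω₁lim : Order.IsSuccLimit ((Cardinal.aleph 1).ord : Ordinal.{0}) :=
    Cardinal.isSuccLimit_ord (Cardinal.aleph0_le_aleph 1)
  have hltΔ : ∀ ξ, ξ < (Cardinal.aleph 1).ord → c ξ < Δ := by
    intro ξ hξ
    exact lt_of_lt_of_le (hmono ξ (ξ + 1) (Order.lt_succ ξ))
      (Ordinal.le_bsup _ (ξ + 1) (hω₁lim.succ_lt hξ))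
  have hexξ : ∀ x, x < Δ → ∃ ξ, ξ < (Cardinal.aleph 1).ord ∧ x < c ξ := by
    intro x hx
    rw [hΔ] at hx
    obtain ⟨ξ, hξ, h⟩ := (Ordinal.lt_bsup _).1 hx
    exact ⟨ξ, hξ, h⟩
  set δs : Omega2 := ⟨Δ, hΔκ⟩ with hδs
  obtain ⟨s, hsc, hslt, hfδ⟩ := Hf δs
  have hΔpos : 0 < Δ := lt_of_le_of_lt (zero_le (a := c 0)) (hltΔ 0 hω₁lim.pos)
  have hfΔ : f δs < Δ := by
    rcases s.eq_empty_or_nonempty with he | hne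
    · rw [hfδ, he]
      simpa using hΔpos
    · have hch : ∀ x (_ : x ∈ s), ∃ ξ, ξ < (Cardinal.aleph 1).ord ∧ x < c ξ :=
        fun x hx => hexξ x (hslt x hx)
      choose ξm hξm1 hξm2 using hch
      set T : Set Ordinal.{0} := {a | ∃ x, ∃ hx : x ∈ s, a = ξm x hx} with hT
      have hTcard : #T ≤ Cardinal.aleph0 := by
        have hsub : T ⊆ Set.range (fun z : s => ξm z.1 z.2) := by
          rintro a ⟨x, hx, rfl⟩
          exact ⟨⟨x, hx⟩, rfl⟩
        refine le_trans (Cardinal.mk_le_mk_of_subset hsub) ?_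
        refine le_trans Cardinal.mk_range_le ?_
        exact Cardinal.mk_le_aleph0_iff.2 hsc.to_subtype
      obtain ⟨Ξ, hΞ1, hΞ2⟩ := bdd_lemma reg1 T (fun a ⟨x, hx, ha⟩ => ha ▸ hξm1 x hx)
        (by rw [lift_aleph_one]
            exact lt_of_le_of_lt hTcard Cardinal.aleph0_lt_aleph_one)
      have hsup : sSup s ≤ c Ξ := by
        refine csSup_le hne (fun x hx => ?_)
        exact le_of_lt ((hξm2 x hx).trans (hmono _ _ (hΞ2 _ ⟨x, hx, rfl⟩)))
      rw [hfδ]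
      exact lt_of_le_of_lt hsup (hltΔ Ξ hΞ1)
  obtain ⟨ξ, hξω, hbξ⟩ := hexξ (f δs) hfΔ
  have h1 : Δ < N (Ordinal.bsup.{0,0} (ξ + 1) (fun η _ => c η)) := by
    refine hNspec _ (f δs) ?_ δs rfl
    exact lt_of_lt_of_le hbξ (Ordinal.le_bsup _ ξ (Order.lt_succ ξ))
  rw [← hceq (ξ + 1)] at h1
  exact absurd h1 (not_lt.2 (le_of_lt (hltΔ (ξ + 1) (hω₁lim.succ_lt hξω))))

lemma compatible_pair (p q : PrikryCond)
    (hproj : {β : Omega1 | ∃ α, p.S (α, β) ≠ none} = {β : Omega1 | ∃ α, q.S (α, β) ≠ none})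
    (hagree : ∀ x v w, p.S x = some v → q.S x = some w → v = w) :
    ∃ r, PrikryLE r p ∧ PrikryLE r q := by
  classical
  set Sr : Omega2 × Omega1 → Option Omega1 :=
    fun x => if p.S x = none then q.S x else p.S x with hSr
  have hrp : ∀ x v, p.S x = some v → Sr x = some v := by
    intro x v hx
    rw [hSr]; simp [hx]
  have hrq : ∀ x v, q.S x = some v → Sr x = some v := by
    intro x v hx
    rw [hSr]
    rcases hp : p.S x with _ | w
    · simp [hp, hx]
    · simp [hp, hagree x w v hp hx]
  have hcases : ∀ x, Sr x ≠ none → p.S x ≠ none ∨ q.S x ≠ none := by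
    intro x hx
    rw [hSr] at hx
    by_cases hp : p.S x = none
    · right; simpa [hp] using hx
    · left; exact hp
  obtain ⟨γ, hγ⟩ := p.S_init
  have hprojr : {β : Omega1 | ∃ α, Sr (α, β) ≠ none} = Set.Iio γ := by
    ext β
    constructor
    · rintro ⟨α, hα⟩
      rcases hcases _ hα with h | h
      · exact hγ ▸ ⟨α, h⟩
      · have hmem : β ∈ {β : Omega1 | ∃ α, q.S (α, β) ≠ none} := ⟨α, h⟩
        rw [← hproj] at hmem
        exact hγ ▸ hmem
    · intro hβ
      rw [← hγ] at hβ
      obtain ⟨α, hα⟩ := hβ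
      refine ⟨α, ?_⟩
      rcases hps : p.S (α, β) with _ | v
      · exact absurd hps hα
      · rw [hrp _ v hps]; simp
  refine ⟨⟨Sr, p.𝒜 ∪ q.𝒜, ?_, ⟨γ, hprojr⟩, p.𝒜_ctble.union q.𝒜_ctble, ?_, ?_⟩, ?_, ?_⟩
  · have hsub : {x | Sr x ≠ none} ⊆ {x | p.S x ≠ none} ∪ {x | q.S x ≠ none} :=
      fun x hx => hcases x hx
    exact (p.S_ctble.union q.S_ctble).mono hsub
  · rintro f (hf | hf)
    · exact p.𝒜_dom f hf
    · exact q.𝒜_dom f hf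
  · rintro f (hf | hf) g hg1 hg2
    · exact Or.inl (p.𝒜_closed f hf g hg1 hg2)
    · exact Or.inr (q.𝒜_closed f hf g hg1 hg2)
  · refine ⟨hrp, Set.subset_union_left, ?_⟩
    intro β hβr hβp f hf
    exfalso
    apply hβp
    have hmem : β ∈ Set.Iio γ := by rw [← hprojr]; exact hβr
    rw [← hγ] at hmem
    exact hmem
  · refine ⟨hrq, Set.subset_union_right, ?_⟩
    intro β hβr hβq f hf
    exfalso
    apply hβq
    have hmem : β ∈ Set.Iio γ := by rw [← hprojr]; exact hβr
    rw [← hγ, hproj] at hmem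
    exact hmem

lemma unbounded_lemma (s : Set Omega2) (hs : Cardinal.aleph 2 ≤ #s) (b : Ordinal.{0})
    (hb : b < (Cardinal.aleph 2).ord) : ∃ δ ∈ s, b < δ.1 := by
  by_contra h
  push_neg at h
  have hinj : Function.Injective (fun x : s =>
      (⟨x.1.1, lt_of_le_of_lt (h x.1 x.2) (Order.lt_succ b)⟩ : ↥(Set.Iio (b + 1)))) := by
    intro x y hxy
    apply Subtype.ext
    apply Subtype.ext
    exact congrArg (fun z : ↥(Set.Iio (b + 1) : Set Ordinal.{0}) => z.1) hxy
  have h1 : #s ≤ #(Set.Iio (b + 1) : Set Ordinal.{0}) := Cardinal.mk_le_of_injective hinj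
  rw [Ordinal.mk_Iio_ordinal] at h1
  have hcard : (b + 1 : Ordinal.{0}).card ≤ Cardinal.aleph 1 := by
    refine lt_aleph2_iff.1 (Cardinal.lt_ord.1 ?_)
    exact (Cardinal.isSuccLimit_ord (Cardinal.aleph0_le_aleph 2)).succ_lt hb
  have h2 : #s ≤ Cardinal.aleph 1 := by
    refine h1.trans ?_
    rw [← lift_aleph_one]
    exact Cardinal.lift_le.2 hcard
  exact absurd (hs.trans h2) (not_le.2 (Cardinal.aleph_lt_aleph.2 one_lt_two))

lemma antichain_lt (hCH : Cardinal.continuum.{0} = Cardinal.aleph 1) (A : Set PrikryCond)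
    (hA : ∀ p ∈ A, ∀ q ∈ A, p ≠ q → ¬∃ r, PrikryLE r p ∧ PrikryLE r q) :
    Cardinal.mk A < Cardinal.aleph 2 := by
  by_contra hbig
  rw [not_lt] at hbig
  obtain ⟨u⟩ : Nonempty (Omega2 ↪ ↥A) := by
    rw [← Cardinal.le_def, mk_omega2']
    exact hbig
  set P : Omega2 → PrikryCond := fun i => (u i).1 with hP
  have hPmem : ∀ i, P i ∈ A := fun i => (u i).2
  have hPinj : Function.Injective P := fun i j hij => u.injective (Subtype.ext hij)
  -- encoding of pairs
  obtain ⟨E⟩ : Nonempty (Omega2 × Omega1 ≃ Omega2) := by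
    rw [← Cardinal.eq]
    rw [Cardinal.mk_prod, Cardinal.lift_id, Cardinal.lift_id, mk_omega1', mk_omega2',
      Cardinal.mul_eq_max (Cardinal.aleph0_le_aleph 2) (Cardinal.aleph0_le_aleph 1),
      max_eq_left (Cardinal.aleph_le_aleph.2 one_le_two)]
  set g : Omega2 → Omega2 → Option Omega1 := fun i x => (P i).S (E.symm x) with hg
  have hgsupp : ∀ i, {x : Omega2 | g i x ≠ none}.Countable := by
    intro i
    have hsub : {x : Omega2 | g i x ≠ none} ⊆ E '' {y | (P i).S y ≠ none} :=
      fun x hx => ⟨E.symm x, hx, E.apply_symm_apply x⟩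
    exact (((P i).S_ctble).image E).mono hsub
  set D : Omega2 → Set Ordinal.{0} :=
    fun i => Subtype.val '' {x : Omega2 | g i x ≠ none} with hD
  have hDc : ∀ i, (D i).Countable := fun i => (hgsupp i).image _
  have hDlt : ∀ i, ∀ a ∈ D i, a < (Cardinal.aleph 2).ord := by
    rintro i a ⟨x, _, rfl⟩
    exact x.2
  -- γ of each condition
  choose γ γspec using fun i => (P i).S_init
  -- the pressing-down function
  set fG : Omega2 → Ordinal.{0} := fun δ => sSup (D δ ∩ Set.Iio δ.1) with hfG
  obtain ⟨bstar, hbstar⟩ := weak_fodor fG (fun δ =>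
    ⟨D δ ∩ Set.Iio δ.1, (hDc δ).mono Set.inter_subset_left, fun x hx => hx.2, rfl⟩)
  -- bstar is small
  have haleph2pos : (0 : Cardinal.{1}) < Cardinal.aleph 2 :=
    lt_of_lt_of_le Cardinal.aleph0_pos (Cardinal.aleph0_le_aleph 2)
  have hfib_ne : Nonempty {δ : Omega2 // fG δ = bstar} := by
    rw [← Cardinal.mk_ne_zero_iff]
    intro h0
    rw [h0] at hbstar
    exact absurd hbstar (not_le.2 haleph2pos)
  obtain ⟨δ₀, hδ₀⟩ := hfib_ne
  have hbstar_lt : bstar < (Cardinal.aleph 2).ord := by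
    have hle : fG δ₀ ≤ δ₀.1 := by
      show sSup (D δ₀ ∩ Set.Iio δ₀.1) ≤ δ₀.1
      rcases (D δ₀ ∩ Set.Iio δ₀.1).eq_empty_or_nonempty with he | hne
      · rw [he, csSup_empty]
        exact zero_le
      · exact csSup_le hne (fun x hx => le_of_lt hx.2)
    exact lt_of_le_of_lt (hδ₀ ▸ hle) δ₀.2
  -- the pigeonhole on traces
  set B : Set Omega2 := {y : Omega2 | y.1 < bstar + 1} with hB
  have hBcard : #B ≤ Cardinal.aleph 1 := by
    have hinj : Function.Injective (fun y : B =>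
        (⟨y.1.1, y.2⟩ : ↥(Set.Iio (bstar + 1) : Set Ordinal.{0}))) := by
      intro x y hxy
      apply Subtype.ext; apply Subtype.ext
      exact congrArg (fun z : ↥(Set.Iio (bstar + 1) : Set Ordinal.{0}) => z.1) hxy
    refine le_trans (Cardinal.mk_le_of_injective hinj) ?_
    rw [Ordinal.mk_Iio_ordinal]
    have hcard : (bstar + 1 : Ordinal.{0}).card ≤ Cardinal.aleph 1 :=
      lt_aleph2_iff.1 (Cardinal.lt_ord.1
        ((Cardinal.isSuccLimit_ord (Cardinal.aleph0_le_aleph 2)).succ_lt hbstar_lt))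
    rw [← lift_aleph_one]
    exact Cardinal.lift_le.2 hcard
  set TrT := {h : ↥B → Option Omega1 // {x | h x ≠ none}.Countable} with hTrT
  have htrc : ∀ i : Omega2, {x : ↥B | g i x.1 ≠ none}.Countable := by
    intro i
    have : {x : ↥B | g i x.1 ≠ none} = Subtype.val ⁻¹' {y : Omega2 | g i y ≠ none} := rfl
    rw [this]
    exact (hgsupp i).preimage Subtype.val_injective
  set T' : Omega2 → Omega1 × TrT :=
    fun i => (γ i, ⟨fun x => g i x.1, htrc i⟩) with hT'
  have hTr : #(Omega1 × TrT) ≤ Cardinal.aleph 1 := by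
    rw [Cardinal.mk_prod, Cardinal.lift_id, Cardinal.lift_id, mk_omega1']
    calc Cardinal.aleph 1 * #TrT ≤ Cardinal.aleph 1 * Cardinal.aleph 1 :=
      mul_le_mul_right (countFun (↥B) hBcard hCH) _
    _ = Cardinal.aleph 1 := Cardinal.mul_eq_self (Cardinal.aleph0_le_aleph 1)
  obtain ⟨tstar, htstar⟩ := exists_big_fiber
    (fun δ : {δ : Omega2 // fG δ = bstar} => T' δ.1) hbstar hTr
  set S2 : Set Omega2 := {δ | fG δ = bstar ∧ T' δ = tstar} with hS2
  have hS2big : Cardinal.aleph 2 ≤ #S2 := by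
    refine le_trans htstar (Cardinal.mk_le_of_injective
      (f := fun x : {a : {δ : Omega2 // fG δ = bstar} // T' a.1 = tstar} =>
        show ↥S2 from ⟨x.1.1, x.1.2, x.2⟩) ?_)
    intro x y hxy
    apply Subtype.ext; apply Subtype.ext
    exact congrArg (fun z : ↥S2 => z.1) hxy
  -- pick the pair
  have hS2ne : S2.Nonempty := by
    rw [← Set.nonempty_coe_sort, ← Cardinal.mk_ne_zero_iff]
    intro h0
    rw [h0] at hS2big
    exact absurd hS2big (not_le.2 haleph2pos)
  obtain ⟨δ, hδS2⟩ := hS2ne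
  obtain ⟨η, hη1, hη2⟩ := bdd_lemma reg2 (D δ) (hDlt δ)
    (by rw [lift_aleph_two]
        refine lt_of_le_of_lt (Cardinal.mk_le_aleph0_iff.2 (hDc δ).to_subtype) ?_
        exact lt_of_lt_of_le Cardinal.aleph0_lt_aleph_one (Cardinal.aleph_le_aleph.2 one_le_two))
  have hbmax_lt : max η (δ.1 + 1) < (Cardinal.aleph 2).ord :=
    max_lt hη1 ((Cardinal.isSuccLimit_ord (Cardinal.aleph0_le_aleph 2)).succ_lt δ.2)
  obtain ⟨δ', hδ'S2, hδ'big⟩ := unbounded_lemma S2 hS2big _ hbmax_lt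
  have hδne : δ ≠ δ' := by
    intro h
    rw [h] at hδ'big
    have h1 : δ'.1 < δ'.1 + 1 := by
      rw [Ordinal.add_one_eq_succ]; exact Order.lt_succ _
    exact absurd (lt_trans h1 (lt_of_le_of_lt (le_max_right η (δ'.1 + 1)) hδ'big))
      (lt_irrefl _)
  have hγeq : γ δ = γ δ' := congrArg Prod.fst (hδS2.2.trans hδ'S2.2.symm)
  have htreq : (fun x : ↥B => g δ x.1) = (fun x : ↥B => g δ' x.1) :=
    congrArg (fun z : Omega1 × TrT => z.2.1) (hδS2.2.trans hδ'S2.2.symm)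
  -- the two conditions agree
  have hproj : {β : Omega1 | ∃ α, (P δ).S (α, β) ≠ none} =
      {β : Omega1 | ∃ α, (P δ').S (α, β) ≠ none} := by
    rw [γspec δ, γspec δ', hγeq]
  have hagree : ∀ x v w, (P δ).S x = some v → (P δ').S x = some w → v = w := by
    intro x v w hpv hqw
    set y : Omega2 := E x with hy
    have hgiy : g δ y = some v := by
      rw [hg]
      simp only [hy, Equiv.symm_apply_apply]
      exact hpv
    have hgjy : g δ' y = some w := by
      rw [hg]
      simp only [hy, Equiv.symm_apply_apply]
      exact hqw
    have hyDi : y.1 ∈ D δ := ⟨y, by simp [hgiy], rfl⟩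
    have hylt : y.1 < δ'.1 :=
      lt_of_lt_of_le (hη2 y.1 hyDi) ((le_max_left _ _).trans (le_of_lt hδ'big))
    have hyDj : y.1 ∈ D δ' := ⟨y, by simp [hgjy], rfl⟩
    have hsup : y.1 ≤ fG δ' := by
      rw [hfG]
      refine le_csSup ⟨δ'.1, fun z hz => le_of_lt hz.2⟩ ⟨hyDj, hylt⟩
    have hyB : y ∈ B := lt_of_le_of_lt (hsup.trans_eq hδ'S2.1) (Order.lt_succ bstar)
    have := congrFun htreq ⟨y, hyB⟩
    simp only at this
    rw [hgiy, hgjy] at this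
    exact Option.some.inj this
  obtain ⟨r, hr1, hr2⟩ := compatible_pair (P δ) (P δ') hproj hagree
  exact hA (P δ) (hPmem δ) (P δ') (hPmem δ') (fun h => hδne (hPinj h)) ⟨r, hr1, hr2⟩

lemma countably_closed (f : ℕ → PrikryCond) (hf : ∀ n, PrikryLE (f (n + 1)) (f n)) :
    ∃ b, ∀ n, PrikryLE b (f n) := by
  classical
  have hS : ∀ m n, m ≤ n → ∀ x v, (f m).S x = some v → (f n).S x = some v := by
    intro m n hmn
    induction n with
    | zero => intro x v h; obtain rfl := Nat.le_zero.1 hmn; exact h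
    | succ n IH =>
      rcases Nat.lt_or_ge m (n + 1) with h | h
      · intro x v hv
        exact (hf n).1 x v (IH (Nat.lt_succ_iff.1 h) x v hv)
      · intro x v hv; obtain rfl := Nat.le_antisymm hmn h; exact hv
  have hA : ∀ m n, m ≤ n → (f m).𝒜 ⊆ (f n).𝒜 := by
    intro m n hmn
    induction n with
    | zero => obtain rfl := Nat.le_zero.1 hmn; exact le_rfl
    | succ n IH =>
      rcases Nat.lt_or_ge m (n + 1) with h | h
      · exact (IH (Nat.lt_succ_iff.1 h)).trans (hf n).2.1
      · obtain rfl := Nat.le_antisymm hmn h; exact le_rfl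
  set Sb : Omega2 × Omega1 → Option Omega1 :=
    fun x => if h : ∃ n, (f n).S x ≠ none then (f (Nat.find h)).S x else none with hSb
  have bS_some : ∀ x v, Sb x = some v ↔ ∃ n, (f n).S x = some v := by
    intro x v
    rw [hSb]
    constructor
    · intro h
      by_cases hex : ∃ n, (f n).S x ≠ none
      · simp only [hex, dif_pos] at h
        exact ⟨_, h⟩
      · simp [hex] at h
    · rintro ⟨n, hn⟩
      have hex : ∃ n, (f n).S x ≠ none := ⟨n, by simp [hn]⟩
      simp only [hex, dif_pos]
      rcases hN : (f (Nat.find hex)).S x with _ | w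
      · exact absurd hN (Nat.find_spec hex)
      · rw [hS (Nat.find hex) n (Nat.find_le (by simp [hn])) x w hN] at hn
        exact hn
  have bS_ne : ∀ x, Sb x ≠ none ↔ ∃ n, (f n).S x ≠ none := by
    intro x
    constructor
    · intro h
      rcases hv : Sb x with _ | v
      · exact absurd hv h
      · obtain ⟨n, hn⟩ := (bS_some x v).1 hv
        exact ⟨n, by simp [hn]⟩
    · intro h
      rw [hSb]
      simp only [h, dif_pos]
      exact Nat.find_spec h
  choose γ hγspec using fun n => (f n).S_init
  set G : Ordinal.{0} := ⨆ n, (γ n).1 with hG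
  have hGlt : G < (Cardinal.aleph 1).ord := by
    refine Cardinal.iSup_lt_ord_of_isRegular Cardinal.isRegular_aleph_one ?_ (fun n => (γ n).2)
    rw [Cardinal.mk_nat]
    exact Cardinal.aleph0_lt_aleph_one
  have hGmem : ∀ n, (γ n).1 ≤ G := fun n => le_ciSup (Ordinal.bddAbove_range _) n
  refine ⟨⟨Sb, ⋃ n, (f n).𝒜, ?_, ⟨⟨G, hGlt⟩, ?_⟩, ?_, ?_, ?_⟩, ?_⟩
  · have hsub : {x | Sb x ≠ none} ⊆ ⋃ n, {x | (f n).S x ≠ none} := by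
      intro x hx
      obtain ⟨n, hn⟩ := (bS_ne x).1 hx
      exact Set.mem_iUnion.2 ⟨n, hn⟩
    exact (Set.countable_iUnion (fun n => (f n).S_ctble)).mono hsub
  · ext β
    simp only [Set.mem_setOf_eq, Set.mem_Iio]
    constructor
    · rintro ⟨α, hα⟩
      obtain ⟨n, hn⟩ := (bS_ne _).1 hα
      have hmem : β ∈ Set.Iio (γ n) := by rw [← hγspec n]; exact ⟨α, hn⟩
      exact lt_of_lt_of_le hmem (Subtype.mk_le_mk.2 (hGmem n))
    · intro hβ
      have hβG : β.1 < G := hβ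
      have hexn : ∃ n, β.1 < (γ n).1 := by
        by_contra hcon
        push_neg at hcon
        exact absurd (ciSup_le hcon : G ≤ β.1) (not_le.2 hβG)
      obtain ⟨n, hn⟩ := hexn
      have hmem : β ∈ Set.Iio (γ n) := hn
      rw [← hγspec n] at hmem
      obtain ⟨α, hα⟩ := hmem
      exact ⟨α, (bS_ne _).2 ⟨n, hα⟩⟩
  · exact Set.countable_iUnion (fun n => (f n).𝒜_ctble)
  · rintro g hg
    obtain ⟨n, hn⟩ := Set.mem_iUnion.1 hg
    exact (f n).𝒜_dom g hn
  · rintro g hg g' hg1 hg2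
    obtain ⟨n, hn⟩ := Set.mem_iUnion.1 hg
    exact Set.mem_iUnion.2 ⟨n, (f n).𝒜_closed g hn g' hg1 hg2⟩
  · intro n
    refine ⟨?_, ?_, ?_⟩
    · intro x v hv
      exact (bS_some x v).2 ⟨n, hv⟩
    · intro g hg
      exact Set.mem_iUnion.2 ⟨n, hg⟩
    · intro β hβb hβn g hg
      obtain ⟨α₀, hα₀⟩ := hβb
      obtain ⟨m, hm⟩ := (bS_ne _).1 hα₀
      have hQ : ∃ k, ∃ α : Omega2, (f k).S (α, β) ≠ none := ⟨m, α₀, hm⟩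
      set M := Nat.find hQ with hM
      have hQM : ∃ α : Omega2, (f M).S (α, β) ≠ none := Nat.find_spec hQ
      have hMn : n < M := by
        rcases Nat.lt_or_ge n M with h | h
        · exact h
        · exfalso
          obtain ⟨α, hα⟩ := hQM
          rcases hv : (f M).S (α, β) with _ | v
          · exact hα hv
          · exact hβn ⟨α, by rw [hS M n h _ v hv]; simp⟩
      obtain ⟨K, hK⟩ : ∃ K, M = K + 1 := ⟨M - 1, by omega⟩
      have hnotK : ¬∃ α : Omega2, (f K).S (α, β) ≠ none :=
        Nat.find_min hQ (by omega)
      have hgK : g ∈ (f K).𝒜 := hA n K (by omega) hg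
      obtain ⟨α, v, hv1, hv2⟩ := (hf K).2.2 β (hK ▸ hQM) hnotK g hgK
      exact ⟨α, v, hv1, (bS_some _ _).2 ⟨K + 1, hv2⟩⟩

end PrikryAux

/-- Assuming CH, the poset `P_{ω₂,ω₁}` is `ℵ₂`-c.c. (every antichain has
size `< ℵ₂`) and countably closed (every countable decreasing sequence has a lower
bound). -/
theorem stmt_19 (hCH : Cardinal.continuum.{0} = Cardinal.aleph 1) :
    (∀ A : Set PrikryCond,
      (∀ p ∈ A, ∀ q ∈ A, p ≠ q → ¬∃ r, PrikryLE r p ∧ PrikryLE r q) →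
      Cardinal.mk A < Cardinal.aleph 2) ∧
    (∀ f : ℕ → PrikryCond, (∀ n, PrikryLE (f (n + 1)) (f n)) →
      ∃ b, ∀ n, PrikryLE b (f n)) := by
  exact ⟨antichain_lt hCH, countably_closed⟩
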